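/- Let S ⊂ R⁵ be the simplex with vertices (1/2,1,1/3,1,1), (1/2,0,1/3,1,1), (1/2,1/2,1/3,0,1), (1/2,1/2,0,1/3,0), (0,1/2,1,1/3,0), (1,1/2,1,1/3,0). Then S ⊆ Q₅ = [0,1]⁵, ξ(S) = 5, and every vertex of Q₅ lies on the boundary of 5S; i.e., S is a perfect simplex in R⁵. -/

import Mathlib

open Finset MeasureTheory

/-- The unit cube `[0,1]^n` in `ℝ^n`. -/
def unitCube (n : ℕ) : Set (Fin n → ℝ) := {x | ∀ i, 0 ≤ x i ∧ x i ≤ 1}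

/-- The set of vertices of the unit cube, i.e. `{0,1}^n`. -/
def cubeVerts (n : ℕ) : Set (Fin n → ℝ) := {x | ∀ i, x i = 0 ∨ x i = 1}

/-- The (solid) simplex spanned by `n+1` points. -/
def simplexSet {n : ℕ} (v : Fin (n + 1) → (Fin n → ℝ)) : Set (Fin n → ℝ) :=
  convexHull ℝ (Set.range v)

/-- The centroid (center of gravity) of the simplex with vertices `v`. -/
noncomputable def simplexCentroid {n : ℕ} (v : Fin (n + 1) → (Fin n → ℝ)) : Fin n → ℝ :=
  ((n : ℝ) + 1)⁻¹ • ∑ j, v j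

/-- The homothety of the simplex with vertices `v`, with center the centroid and ratio `σ`. -/
noncomputable def homSimplex {n : ℕ} (v : Fin (n + 1) → (Fin n → ℝ)) (σ : ℝ) : Set (Fin n → ℝ) :=
  (fun x => simplexCentroid v + σ • (x - simplexCentroid v)) '' simplexSet v

/-- `ξ(S) = min {σ ≥ 1 : Q_n ⊆ σS}`. -/
noncomputable def xiVal {n : ℕ} (v : Fin (n + 1) → (Fin n → ℝ)) : ℝ :=
  sInf {σ : ℝ | 1 ≤ σ ∧ unitCube n ⊆ homSimplex v σ}

/-- A function `ℝ^n → ℝ` is an affine polynomial of degree at most 1. -/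
def IsAffinePoly {n : ℕ} (f : (Fin n → ℝ) → ℝ) : Prop :=
  ∃ a : Fin n → ℝ, ∃ b : ℝ, ∀ x, f x = ∑ i, a i * x i + b

/-- `lam` is the family of basic Lagrange polynomials of the simplex with vertices `v`. -/
def IsLagrangeBasis {n : ℕ} (v : Fin (n + 1) → (Fin n → ℝ))
    (lam : Fin (n + 1) → (Fin n → ℝ) → ℝ) : Prop :=
  (∀ j, IsAffinePoly (lam j)) ∧ ∀ j k, lam j (v k) = if j = k then 1 else 0

/-- The `i`-th axial diameter of a set `S ⊆ ℝ^n`: the supremum of lengths of segments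
in `S` parallel to the `i`-th coordinate axis. -/
noncomputable def axialDiam {n : ℕ} (S : Set (Fin n → ℝ)) (i : Fin n) : ℝ :=
  sSup {t : ℝ | ∃ x ∈ S, ∃ y ∈ S, (∀ k, k ≠ i → x k = y k) ∧ y i - x i = t}

/-- The vertices of the perfect simplex `S ⊂ ℝ⁵`. -/
noncomputable def S5verts : Fin 6 → (Fin 5 → ℝ) :=
  ![![1/2, 1, 1/3, 1, 1], ![1/2, 0, 1/3, 1, 1], ![1/2, 1/2, 1/3, 0, 1],
    ![1/2, 1/2, 0, 1/3, 0], ![0, 1/2, 1, 1/3, 0], ![1, 1/2, 1, 1/3, 0]]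

noncomputable def lam5 (j : Fin 6) (x : Fin 5 → ℝ) : ℝ :=
  if j = 0 then x 1 + x 3 / 2 + x 4 / 6 - 2/3
  else if j = 1 then -x 1 + x 3 / 2 + x 4 / 6 + 1/3
  else if j = 2 then -x 3 + 2 * x 4 / 3 + 1/3
  else if j = 3 then -x 2 - 2 * x 4 / 3 + 1
  else if j = 4 then -x 0 + x 2 / 2 - x 4 / 6 + 1/2
  else x 0 + x 2 / 2 - x 4 / 6 - 1/2

lemma S5_00 : S5verts 0 0 = 1/2 := rfl
lemma S5_01 : S5verts 0 1 = 1 := rfl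
lemma S5_02 : S5verts 0 2 = 1/3 := rfl
lemma S5_03 : S5verts 0 3 = 1 := rfl
lemma S5_04 : S5verts 0 4 = 1 := rfl
lemma S5_10 : S5verts 1 0 = 1/2 := rfl
lemma S5_11 : S5verts 1 1 = 0 := rfl
lemma S5_12 : S5verts 1 2 = 1/3 := rfl
lemma S5_13 : S5verts 1 3 = 1 := rfl
lemma S5_14 : S5verts 1 4 = 1 := rfl
lemma S5_20 : S5verts 2 0 = 1/2 := rfl
lemma S5_21 : S5verts 2 1 = 1/2 := rfl
lemma S5_22 : S5verts 2 2 = 1/3 := rfl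
lemma S5_23 : S5verts 2 3 = 0 := rfl
lemma S5_24 : S5verts 2 4 = 1 := rfl
lemma S5_30 : S5verts 3 0 = 1/2 := rfl
lemma S5_31 : S5verts 3 1 = 1/2 := rfl
lemma S5_32 : S5verts 3 2 = 0 := rfl
lemma S5_33 : S5verts 3 3 = 1/3 := rfl
lemma S5_34 : S5verts 3 4 = 0 := rfl
lemma S5_40 : S5verts 4 0 = 0 := rfl
lemma S5_41 : S5verts 4 1 = 1/2 := rfl
lemma S5_42 : S5verts 4 2 = 1 := rfl
lemma S5_43 : S5verts 4 3 = 1/3 := rfl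
lemma S5_44 : S5verts 4 4 = 0 := rfl
lemma S5_50 : S5verts 5 0 = 1 := rfl
lemma S5_51 : S5verts 5 1 = 1/2 := rfl
lemma S5_52 : S5verts 5 2 = 1 := rfl
lemma S5_53 : S5verts 5 3 = 1/3 := rfl
lemma S5_54 : S5verts 5 4 = 0 := rfl

lemma lam5_sum (x : Fin 5 → ℝ) : ∑ j, lam5 j x = 1 := by
  simp [lam5, Fin.sum_univ_six]; ring

lemma lam5_recon0 (x : Fin 5 → ℝ) : ∑ j, lam5 j x * S5verts j 0 = x 0 := by
  simp only [Fin.sum_univ_six, lam5, Fin.reduceEq, reduceIte, if_true, if_false, S5_00, S5_01, S5_02, S5_03, S5_04, S5_10, S5_11, S5_12, S5_13, S5_14, S5_20, S5_21, S5_22, S5_23, S5_24, S5_30, S5_31, S5_32, S5_33, S5_34, S5_40, S5_41, S5_42, S5_43, S5_44, S5_50, S5_51, S5_52, S5_53, S5_54]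
  norm_num
  try ring
lemma lam5_recon1 (x : Fin 5 → ℝ) : ∑ j, lam5 j x * S5verts j 1 = x 1 := by
  simp only [Fin.sum_univ_six, lam5, Fin.reduceEq, reduceIte, if_true, if_false, S5_00, S5_01, S5_02, S5_03, S5_04, S5_10, S5_11, S5_12, S5_13, S5_14, S5_20, S5_21, S5_22, S5_23, S5_24, S5_30, S5_31, S5_32, S5_33, S5_34, S5_40, S5_41, S5_42, S5_43, S5_44, S5_50, S5_51, S5_52, S5_53, S5_54]
  norm_num
  try ring
lemma lam5_recon2 (x : Fin 5 → ℝ) : ∑ j, lam5 j x * S5verts j 2 = x 2 := by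
  simp only [Fin.sum_univ_six, lam5, Fin.reduceEq, reduceIte, if_true, if_false, S5_00, S5_01, S5_02, S5_03, S5_04, S5_10, S5_11, S5_12, S5_13, S5_14, S5_20, S5_21, S5_22, S5_23, S5_24, S5_30, S5_31, S5_32, S5_33, S5_34, S5_40, S5_41, S5_42, S5_43, S5_44, S5_50, S5_51, S5_52, S5_53, S5_54]
  norm_num
  try ring
lemma lam5_recon3 (x : Fin 5 → ℝ) : ∑ j, lam5 j x * S5verts j 3 = x 3 := by
  simp only [Fin.sum_univ_six, lam5, Fin.reduceEq, reduceIte, if_true, if_false, S5_00, S5_01, S5_02, S5_03, S5_04, S5_10, S5_11, S5_12, S5_13, S5_14, S5_20, S5_21, S5_22, S5_23, S5_24, S5_30, S5_31, S5_32, S5_33, S5_34, S5_40, S5_41, S5_42, S5_43, S5_44, S5_50, S5_51, S5_52, S5_53, S5_54]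
  norm_num
  try ring
lemma lam5_recon4 (x : Fin 5 → ℝ) : ∑ j, lam5 j x * S5verts j 4 = x 4 := by
  simp only [Fin.sum_univ_six, lam5, Fin.reduceEq, reduceIte, if_true, if_false, S5_00, S5_01, S5_02, S5_03, S5_04, S5_10, S5_11, S5_12, S5_13, S5_14, S5_20, S5_21, S5_22, S5_23, S5_24, S5_30, S5_31, S5_32, S5_33, S5_34, S5_40, S5_41, S5_42, S5_43, S5_44, S5_50, S5_51, S5_52, S5_53, S5_54]
  norm_num
  try ring

lemma lam5_recon (x : Fin 5 → ℝ) (i : Fin 5) :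
    ∑ j, lam5 j x * S5verts j i = x i := by
  have h : i = 0 ∨ i = 1 ∨ i = 2 ∨ i = 3 ∨ i = 4 := by omega
  rcases h with rfl|rfl|rfl|rfl|rfl
  exacts [lam5_recon0 x, lam5_recon1 x, lam5_recon2 x, lam5_recon3 x, lam5_recon4 x]

lemma lam5_vert_nonneg (k : Fin 6) (j : Fin 6) : 0 ≤ lam5 j (S5verts k) := by
  have h : k = 0 ∨ k = 1 ∨ k = 2 ∨ k = 3 ∨ k = 4 ∨ k = 5 := by omega
  unfold lam5
  rcases h with rfl|rfl|rfl|rfl|rfl|rfl <;> split_ifs <;>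
    simp only [S5_00, S5_01, S5_02, S5_03, S5_04, S5_10, S5_11, S5_12, S5_13, S5_14, S5_20, S5_21, S5_22, S5_23, S5_24, S5_30, S5_31, S5_32, S5_33, S5_34, S5_40, S5_41, S5_42, S5_43, S5_44, S5_50, S5_51, S5_52, S5_53, S5_54] <;> norm_num

lemma lam5_affine (j : Fin 6) (a : ℝ) (x y : Fin 5 → ℝ) :
    lam5 j (a • x + (1 - a) • y) = a * lam5 j x + (1 - a) * lam5 j y := by
  unfold lam5
  split_ifs <;> simp [Pi.add_apply, Pi.smul_apply, smul_eq_mul] <;> ring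

lemma mem_simplex (x : Fin 5 → ℝ) :
    x ∈ simplexSet S5verts ↔ ∀ j, 0 ≤ lam5 j x := by
  constructor
  · intro hx
    have hconv : Convex ℝ {y : Fin 5 → ℝ | ∀ j, 0 ≤ lam5 j y} := by
      intro y hy z hz a b ha hb hab j
      have hb' : b = 1 - a := by linarith
      subst hb'
      rw [lam5_affine j a y z]
      have := hy j; have := hz j
      nlinarith
    have hsub : Set.range S5verts ⊆ {y : Fin 5 → ℝ | ∀ j, 0 ≤ lam5 j y} := by
      rintro _ ⟨k, rfl⟩ j
      exact lam5_vert_nonneg k j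
    exact convexHull_min hsub hconv hx
  · intro h
    have key : x = Finset.univ.centerMass (fun j => lam5 j x) S5verts := by
      rw [Finset.centerMass_eq_of_sum_1 _ _ (lam5_sum x)]
      funext i
      rw [Finset.sum_apply]
      have : ∀ j : Fin 6, (lam5 j x • S5verts j) i = lam5 j x * S5verts j i := fun j => rfl
      simp_rw [this]
      exact (lam5_recon x i).symm
    rw [key]
    exact Finset.centerMass_mem_convexHull _ (fun j _ => h j)
      (by rw [lam5_sum x]; norm_num) (fun j _ => Set.mem_range_self j)

lemma centroid_eq : simplexCentroid S5verts = fun _ => (1/2 : ℝ) := by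
  funext i
  show ((5 : ℝ) + 1)⁻¹ * (∑ j, S5verts j) i = 1/2
  rw [Finset.sum_apply]
  have h : i = 0 ∨ i = 1 ∨ i = 2 ∨ i = 3 ∨ i = 4 := by omega
  rcases h with rfl|rfl|rfl|rfl|rfl <;>
    simp only [Fin.sum_univ_six, S5_00, S5_01, S5_02, S5_03, S5_04, S5_10, S5_11, S5_12, S5_13, S5_14, S5_20, S5_21, S5_22, S5_23, S5_24, S5_30, S5_31, S5_32, S5_33, S5_34, S5_40, S5_41, S5_42, S5_43, S5_44, S5_50, S5_51, S5_52, S5_53, S5_54] <;> norm_num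

lemma lam5_hom (j : Fin 6) (σ : ℝ) (x : Fin 5 → ℝ) :
    lam5 j ((fun _ => (1/2 : ℝ)) + σ • (x - fun _ => (1/2 : ℝ)))
      = σ * lam5 j x + (1 - σ)/6 := by
  unfold lam5
  split_ifs <;>
    simp only [Pi.add_apply, Pi.smul_apply, Pi.sub_apply, smul_eq_mul] <;> ring

lemma hom_char (σ : ℝ) (hσ : 0 < σ) :
    homSimplex S5verts σ = {y : Fin 5 → ℝ | ∀ j, (1 - σ)/6 ≤ lam5 j y} := by
  unfold homSimplex
  rw [centroid_eq]
  ext y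
  constructor
  · rintro ⟨x, hx, rfl⟩ j
    rw [lam5_hom]
    have := (mem_simplex x).1 hx j
    nlinarith
  · intro hy
    refine ⟨(fun _ => (1/2:ℝ)) + σ⁻¹ • (y - fun _ => (1/2:ℝ)), ?_, ?_⟩
    · rw [mem_simplex]
      intro j
      rw [lam5_hom]
      have h1 := hy j
      have h2 : σ⁻¹ * ((1 - σ)/6) ≤ σ⁻¹ * lam5 j y :=
        mul_le_mul_of_nonneg_left h1 (inv_nonneg.2 hσ.le)
      have h3 : σ⁻¹ * ((1 - σ)/6) = (σ⁻¹ * (1-σ))/6 := by ring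
      have h4 : σ * σ⁻¹ = 1 := mul_inv_cancel₀ hσ.ne'
      nlinarith
    · funext i
      simp only [Pi.add_apply, Pi.smul_apply, Pi.sub_apply, smul_eq_mul]
      have h4 : σ * σ⁻¹ = 1 := mul_inv_cancel₀ hσ.ne'
      have h5 : σ * (σ⁻¹ * (y i - 1/2)) = y i - 1/2 := by
        rw [← mul_assoc, h4, one_mul]
      linarith [h5]

lemma cube_sub_hom5 : unitCube 5 ⊆ homSimplex S5verts 5 := by
  rw [hom_char 5 (by norm_num)]
  intro x hx j
  have h0 := hx 0; have h1 := hx 1; have h2 := hx 2; have h3 := hx 3; have h4 := hx 4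
  unfold lam5
  split_ifs <;> norm_num <;>
    [linarith [h1.1, h3.1, h4.1]; linarith [h1.2, h3.1, h4.1];
     linarith [h3.2, h4.1]; linarith [h2.2, h4.2];
     linarith [h0.2, h2.1, h4.2]; linarith [h0.1, h2.1, h4.2]]

lemma simplex_sub_cube : simplexSet S5verts ⊆ unitCube 5 := by
  intro x hx i
  rw [mem_simplex] at hx
  have h0 := hx 0; have h1 := hx 1; have h2 := hx 2
  have h3 := hx 3; have h4 := hx 4; have h5 := hx 5
  simp only [lam5, Fin.reduceEq, reduceIte, if_true, if_false] at h0 h1 h2 h3 h4 h5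
  have hi : i = 0 ∨ i = 1 ∨ i = 2 ∨ i = 3 ∨ i = 4 := by omega
  rcases hi with rfl|rfl|rfl|rfl|rfl <;> constructor <;> linarith

lemma on_frontier (w : Fin 5 → ℝ) (hwT : w ∈ homSimplex S5verts 5)
    (j : Fin 6) (d : Fin 5 → ℝ)
    (h : ∀ t : ℝ, 0 < t → lam5 j (w + t • d) < -(2/3)) :
    w ∈ frontier (homSimplex S5verts 5) := by
  rw [frontier_eq_closure_inter_closure]
  refine ⟨subset_closure hwT, ?_⟩
  have h0 : Filter.Tendsto (fun n : ℕ => ((n : ℝ) + 1)⁻¹) Filter.atTop (nhds 0) := by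
    simpa [one_div] using tendsto_one_div_add_atTop_nhds_zero_nat (𝕜 := ℝ)
  have htend : Filter.Tendsto (fun n : ℕ => w + ((n : ℝ) + 1)⁻¹ • d)
      Filter.atTop (nhds w) := by
    have := (h0.smul_const d).const_add w
    simpa using this
  refine mem_closure_of_tendsto htend ?_
  · filter_upwards with n
    rw [hom_char 5 (by norm_num)]
    simp only [Set.mem_compl_iff, Set.mem_setOf_eq, not_forall, not_le]
    refine ⟨j, ?_⟩
    have := h ((n : ℝ) + 1)⁻¹ (by positivity)
    norm_num at this ⊢
    linarith


/-- `S ⊆ Q₅`, `ξ(S) = 5`, and every vertex of `Q₅` lies on the boundary of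
`5S`; i.e. `S` is a perfect simplex in `ℝ⁵`. -/
theorem S5_perfect :
    simplexSet S5verts ⊆ unitCube 5 ∧
    xiVal S5verts = 5 ∧
    ∀ w ∈ cubeVerts 5, w ∈ frontier (homSimplex S5verts 5) := by

  have mem5 : (5 : ℝ) ∈ {σ : ℝ | 1 ≤ σ ∧ unitCube 5 ⊆ homSimplex S5verts σ} :=
    ⟨by norm_num, cube_sub_hom5⟩
  refine ⟨simplex_sub_cube, ?_, ?_⟩
  · apply le_antisymm
    · exact csInf_le ⟨1, fun σ hσ => hσ.1⟩ mem5
    · refine le_csInf ⟨5, mem5⟩ ?_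
      rintro σ ⟨hσ1, hσ2⟩
      have h := hσ2 (show (fun _ => (0 : ℝ)) ∈ unitCube 5 by intro i; norm_num)
      rw [hom_char σ (by linarith)] at h
      have e : lam5 0 (fun _ => (0 : ℝ)) = -(2/3) := by norm_num [lam5]
      have := h 0
      rw [e] at this
      linarith
  · intro w hw
    have hwT : w ∈ homSimplex S5verts 5 := by
      apply cube_sub_hom5
      intro i
      rcases hw i with h | h <;> rw [h] <;> norm_num
    rcases hw 4 with h4 | h4
    · rcases hw 3 with h3 | h3
      · rcases hw 1 with h1 | h1
        · refine on_frontier w hwT 0 (fun k => if k = 1 then (-1 : ℝ) else 0) ?_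
          intro t ht
          simp only [lam5, Fin.reduceEq, reduceIte, Pi.add_apply, Pi.smul_apply,
            smul_eq_mul, h1, h3, h4]
          norm_num; linarith
        · refine on_frontier w hwT 1 (fun k => if k = 1 then (1 : ℝ) else 0) ?_
          intro t ht
          simp only [lam5, Fin.reduceEq, reduceIte, Pi.add_apply, Pi.smul_apply,
            smul_eq_mul, h1, h3, h4]
          norm_num; linarith
      · refine on_frontier w hwT 2 (fun k => if k = 3 then (1 : ℝ) else 0) ?_
        intro t ht
        simp only [lam5, Fin.reduceEq, reduceIte, Pi.add_apply, Pi.smul_apply,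
          smul_eq_mul, h3, h4]
        norm_num; linarith
    · rcases hw 2 with h2 | h2
      · rcases hw 0 with h0 | h0
        · refine on_frontier w hwT 5 (fun k => if k = 0 then (-1 : ℝ) else 0) ?_
          intro t ht
          simp only [lam5, Fin.reduceEq, reduceIte, Pi.add_apply, Pi.smul_apply,
            smul_eq_mul, h0, h2, h4]
          norm_num; linarith
        · refine on_frontier w hwT 4 (fun k => if k = 0 then (1 : ℝ) else 0) ?_
          intro t ht
          simp only [lam5, Fin.reduceEq, reduceIte, Pi.add_apply, Pi.smul_apply,
            smul_eq_mul, h0, h2, h4]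
          norm_num; linarith
      · refine on_frontier w hwT 3 (fun k => if k = 2 then (1 : ℝ) else 0) ?_
        intro t ht
        simp only [lam5, Fin.reduceEq, reduceIte, Pi.add_apply, Pi.smul_apply,
          smul_eq_mul, h2, h4]
        norm_num; linarith
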